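/- Let M and M* be a matching and a maximum matching in a graph G. If every augmenting path with respect to M has length at least 2i-1 (i.e., the shortest augmenting path has length ≥ 2i-1), then |M| ≥ (1 - 1/i)·|M*|. -/

import Mathlib

/-- `M` is a matching of `G`: a set of edges of `G` that are pairwise vertex-disjoint. -/
def IsMatchingSet {V : Type*} (G : SimpleGraph V) (M : Finset (Sym2 V)) : Prop :=
  (∀ e ∈ M, e ∈ G.edgeSet) ∧
    ∀ e ∈ M, ∀ f ∈ M, e ≠ f → ∀ v : V, ¬ (v ∈ e ∧ v ∈ f)

/-- `p` is an augmenting path with respect to the matching `M`: a path between two distinct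
unmatched vertices whose edges alternate between `E \ M` and `M` (the `k`-th edge belongs to
`M` iff `k` is odd). -/
def IsAugmentingPath {V : Type*} (G : SimpleGraph V) (M : Finset (Sym2 V))
    {a b : V} (p : G.Walk a b) : Prop :=
  p.IsPath ∧ a ≠ b ∧ (∀ e ∈ M, a ∉ e) ∧ (∀ e ∈ M, b ∉ e) ∧
    ∀ (k : ℕ) (hk : k < p.edges.length), (p.edges.get ⟨k, hk⟩ ∈ M ↔ k % 2 = 1)

set_option linter.unusedSectionVars false
set_option linter.unnecessarySimpa false

namespace HopcroftKarpAux
open Finset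

variable {V : Type*} [Fintype V] [DecidableEq V]

noncomputable def pt (N : Finset (Sym2 V)) (v : V) : Option V :=
  if h : ∃ w, s(v, w) ∈ N then some h.choose else none

variable {G : SimpleGraph V} {N : Finset (Sym2 V)}

theorem pt_mem {v w : V} (h : pt N v = some w) : s(v, w) ∈ N := by
  unfold pt at h
  split at h
  · rename_i hh; exact (Option.some_inj.mp h) ▸ hh.choose_spec
  · exact absurd h (by simp)

theorem pt_unique (hN : IsMatchingSet G N) {v w w' : V}
    (h1 : s(v, w) ∈ N) (h2 : s(v, w') ∈ N) : w = w' := by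
  by_contra hne
  have hedge : s(v, w) ≠ s(v, w') := by
    intro hcon
    rw [Sym2.eq_iff] at hcon
    rcases hcon with ⟨-, h⟩ | ⟨h1', h2'⟩
    · exact hne h
    · exact hne (h2'.trans h1')
  exact hN.2 _ h1 _ h2 hedge v ⟨Sym2.mem_mk_left _ _, Sym2.mem_mk_left _ _⟩

theorem pt_eq_some (hN : IsMatchingSet G N) {v w : V} (h : s(v, w) ∈ N) :
    pt N v = some w := by
  unfold pt
  split
  · rename_i hh; exact congrArg some (pt_unique hN hh.choose_spec h)
  · rename_i hh; exact absurd ⟨w, h⟩ hh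

theorem pt_none_iff {v : V} : pt N v = none ↔ ∀ e ∈ N, v ∉ e := by
  unfold pt
  split
  · rename_i hh
    simp only [reduceCtorEq, false_iff]; push_neg
    exact ⟨_, hh.choose_spec, Sym2.mem_mk_left _ _⟩
  · rename_i hh
    simp only [true_iff]
    intro e he hv
    obtain ⟨w, rfl⟩ := Sym2.mem_iff_exists.mp hv
    exact hh ⟨w, he⟩

theorem pt_symm (hN : IsMatchingSet G N) {v w : V} (h : pt N v = some w) :
    pt N w = some v := pt_eq_some hN (Sym2.eq_swap ▸ pt_mem h)

theorem pt_ne (hN : IsMatchingSet G N) {v w : V} (h : pt N v = some w) : v ≠ w :=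
  (G.mem_edgeSet.mp (hN.1 _ (pt_mem h))).ne

/-- the step function of the alternating chain: even steps use the matching `Ms`,
odd steps use `M`. -/
noncomputable def stp (M Ms : Finset (Sym2 V)) (n : ℕ) (v : V) : Option V :=
  if n % 2 = 0 then pt Ms v else pt M v

/-- the alternating chain starting at `a`. -/
noncomputable def ch (M Ms : Finset (Sym2 V)) (a : V) : ℕ → Option V
  | 0 => some a
  | (n+1) => (ch M Ms a n).bind (stp M Ms n)

variable {M Ms : Finset (Sym2 V)} (hM : IsMatchingSet G M) (hMs : IsMatchingSet G Ms)

theorem ch_succ {a : V} {n : ℕ} : ch M Ms a (n+1) = (ch M Ms a n).bind (stp M Ms n) := rfl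

theorem ch_succ_of_some {a v : V} {n : ℕ} (h : ch M Ms a n = some v) :
    ch M Ms a (n+1) = stp M Ms n v := by rw [ch_succ, h]; rfl

include hM hMs

theorem stp_symm {n : ℕ} {v w : V} (h : stp M Ms n v = some w) :
    stp M Ms n w = some v := by
  unfold stp at *
  split at h <;> rename_i hn <;> simp only [hn, if_pos, if_neg, reduceIte]
  · exact pt_symm hMs h
  · exact pt_symm hM h

theorem stp_ne {n : ℕ} {v w : V} (h : stp M Ms n v = some w) : v ≠ w := by
  unfold stp at h
  split at h
  · exact pt_ne hMs h
  · exact pt_ne hM h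

/-- backwards determinism -/
theorem ch_back {a v : V} {n : ℕ} (h : ch M Ms a (n+1) = some v) :
    ∃ u, ch M Ms a n = some u ∧ stp M Ms n u = some v ∧ stp M Ms n v = some u := by
  rw [ch_succ] at h
  obtain ⟨u, hu, hsu⟩ := Option.bind_eq_some_iff.mp h
  exact ⟨u, hu, hsu, stp_symm hM hMs hsu⟩

/-- same-parity injectivity of the chain, when `a` is `M`-unmatched. -/
theorem ch_inj_even {a : V} (ha : pt M a = none) :
    ∀ j k v, j % 2 = k % 2 → ch M Ms a j = some v → ch M Ms a k = some v → j = k := by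
  intro j
  induction j with
  | zero =>
    intro k v hpar hj hk
    rcases Nat.eq_zero_or_pos k with rfl | hkpos
    · rfl
    · exfalso
      obtain ⟨k', rfl⟩ := Nat.exists_eq_succ_of_ne_zero hkpos.ne'
      obtain ⟨u, -, -, hback⟩ := ch_back hM hMs hk
      have hv : v = a := by
        rw [show ch M Ms a 0 = some a from rfl] at hj
        exact (Option.some_inj.mp hj).symm
      subst hv
      have hk2 : k' % 2 = 1 := by omega
      unfold stp at hback
      rw [if_neg (by omega)] at hback
      rw [ha] at hback
      exact Option.some_ne_none _ hback.symm
  | succ j ih =>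
    intro k v hpar hj hk
    rcases Nat.eq_zero_or_pos k with rfl | hkpos
    · exfalso
      obtain ⟨u, -, -, hback⟩ := ch_back hM hMs hj
      have hv : v = a := by
        rw [show ch M Ms a 0 = some a from rfl] at hk
        exact (Option.some_inj.mp hk).symm
      subst hv
      unfold stp at hback
      rw [if_neg (by omega)] at hback
      rw [ha] at hback
      exact Option.some_ne_none _ hback.symm
    · obtain ⟨k', rfl⟩ := Nat.exists_eq_succ_of_ne_zero hkpos.ne'
      obtain ⟨u, hu, -, hbj⟩ := ch_back hM hMs hj
      obtain ⟨u', hu', -, hbk⟩ := ch_back hM hMs hk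
      have htypes : j % 2 = k' % 2 := by omega
      have : u = u' := by
        unfold stp at hbj hbk
        rw [htypes] at hbj
        split at hbj <;> split at hbk <;> first
          | (exact Option.some_inj.mp (hbj.symm.trans hbk)) | omega
      subst this
      exact congrArg Nat.succ (ih k' u htypes hu hu')

/-- opposite-parity positions in a chain never share a vertex. -/
theorem ch_ne_cross {a : V} :
    ∀ d j k v, (j - k) + (k - j) = d → j % 2 = 0 → k % 2 = 1 →
      ch M Ms a j = some v → ch M Ms a k = some v → False := by
  intro d
  induction d using Nat.strong_induction_on with
  | _ d ih =>
    intro j k v hd hj2 hk2 hj hk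
    rcases Nat.lt_or_ge j k with hlt | hge
    · -- j < k : step forward from j, back from k
      obtain ⟨k', rfl⟩ := Nat.exists_eq_succ_of_ne_zero (by omega : k ≠ 0)
      obtain ⟨u, hu, -, hback⟩ := ch_back hM hMs hk
      have hkt : k' % 2 = 0 := by omega
      have hfwd : ch M Ms a (j+1) = some u := by
        rw [ch_succ_of_some hj]
        unfold stp at hback ⊢
        rw [if_pos hkt] at hback
        rw [if_pos hj2]
        exact hback
      rcases Nat.eq_or_lt_of_le (Nat.succ_le_of_lt hlt) with heq | hlt2
      · -- k = j + 1 : u = v and stp maps v to itself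
        have : u = v := by
          rw [show j + 1 = k' + 1 from by omega] at hfwd
          exact Option.some_inj.mp (hfwd.symm.trans hk)
        subst this
        unfold stp at hback
        rw [if_pos hkt] at hback
        exact pt_ne hMs hback rfl
      · exact ih ((k' - (j+1)) + ((j+1) - k')) (by omega)
          k' (j+1) u rfl hkt (by omega) hu hfwd
    · -- k < j (so k + 1 ≤ j; j ≠ k by parity, in fact k < j strictly)
      have hlt : k < j := by
        rcases Nat.eq_or_lt_of_le hge with h | h
        · omega
        · exact h
      obtain ⟨j', rfl⟩ := Nat.exists_eq_succ_of_ne_zero (by omega : j ≠ 0)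
      obtain ⟨u, hu, -, hback⟩ := ch_back hM hMs hj
      have hjt : j' % 2 = 1 := by omega
      have hfwd : ch M Ms a (k+1) = some u := by
        rw [ch_succ_of_some hk]
        unfold stp at hback ⊢
        rw [if_neg (show ¬ j' % 2 = 0 by omega)] at hback
        rw [if_neg (show ¬ k % 2 = 0 by omega)]
        exact hback
      rcases Nat.eq_or_lt_of_le (Nat.succ_le_of_lt hlt) with heq | hlt2
      · have : u = v := by
          rw [show k + 1 = j' + 1 from heq] at hfwd
          exact Option.some_inj.mp (hfwd.symm.trans hj)
        subst this
        unfold stp at hback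
        rw [if_neg (by omega)] at hback
        exact pt_ne hM hback rfl
      · exact ih ((k+1 - j') + (j' - (k+1))) (by omega)
          (k+1) j' u rfl (by omega) hjt hfwd hu
/-- full injectivity of chain positions (for `a` that is `M`-unmatched). -/
theorem ch_inj {a : V} (ha : pt M a = none) {j k : ℕ} {v : V}
    (hj : ch M Ms a j = some v) (hk : ch M Ms a k = some v) : j = k := by
  rcases eq_or_ne (j % 2) (k % 2) with hpar | hpar
  · exact ch_inj_even hM hMs ha j k v hpar hj hk
  · exfalso
    rcases Nat.mod_two_eq_zero_or_one j with h0 | h1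
    · exact ch_ne_cross hM hMs _ j k v rfl h0 (by omega) hj hk
    · exact ch_ne_cross hM hMs _ k j v rfl (by omega) h1 hk hj

/-- two chains from distinct `M`-unmatched starts never share a vertex at
same-parity positions. -/
theorem ch_cross_chains {a a' : V} (ha : pt M a = none) (ha' : pt M a' = none) :
    ∀ j k v, j % 2 = k % 2 → ch M Ms a j = some v → ch M Ms a' k = some v →
      j = k ∧ a = a' := by
  intro j
  induction j with
  | zero =>
    intro k v hpar hj hk
    rcases Nat.eq_zero_or_pos k with rfl | hkpos
    · refine ⟨rfl, ?_⟩
      rw [show ch M Ms a 0 = some a from rfl] at hj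
      rw [show ch M Ms a' 0 = some a' from rfl] at hk
      exact (Option.some_inj.mp hj).trans (Option.some_inj.mp hk).symm
    · exfalso
      obtain ⟨k', rfl⟩ := Nat.exists_eq_succ_of_ne_zero hkpos.ne'
      obtain ⟨u, -, -, hback⟩ := ch_back hM hMs hk
      have hv : v = a := by
        rw [show ch M Ms a 0 = some a from rfl] at hj
        exact (Option.some_inj.mp hj).symm
      subst hv
      unfold stp at hback
      rw [if_neg (by omega)] at hback
      rw [ha] at hback
      exact Option.some_ne_none _ hback.symm
  | succ j ih =>
    intro k v hpar hj hk
    rcases Nat.eq_zero_or_pos k with rfl | hkpos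
    · exfalso
      obtain ⟨u, -, -, hback⟩ := ch_back hM hMs hj
      have hv : v = a' := by
        rw [show ch M Ms a' 0 = some a' from rfl] at hk
        exact (Option.some_inj.mp hk).symm
      subst hv
      unfold stp at hback
      rw [if_neg (by omega)] at hback
      rw [ha'] at hback
      exact Option.some_ne_none _ hback.symm
    · obtain ⟨k', rfl⟩ := Nat.exists_eq_succ_of_ne_zero hkpos.ne'
      obtain ⟨u, hu, -, hbj⟩ := ch_back hM hMs hj
      obtain ⟨u', hu', -, hbk⟩ := ch_back hM hMs hk
      have htypes : j % 2 = k' % 2 := by omega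
      have : u = u' := by
        unfold stp at hbj hbk
        rw [htypes] at hbj
        split at hbj <;> split at hbk <;> first
          | (exact Option.some_inj.mp (hbj.symm.trans hbk)) | omega
      subst this
      obtain ⟨h1, h2⟩ := ih k' u htypes hu hu'
      exact ⟨congrArg Nat.succ h1, h2⟩

omit hM hMs

/-- the chain eventually becomes `none`. -/
theorem ch_exists_none (hM : IsMatchingSet G M) (hMs : IsMatchingSet G Ms)
    {a : V} (ha : pt M a = none) : ∃ n, ch M Ms a n = none := by
  by_contra hcon
  push_neg at hcon
  have hmap : ∀ n ∈ Finset.range (Fintype.card V + 1),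
      (ch M Ms a n).getD a ∈ (Finset.univ : Finset V) := fun _ _ => Finset.mem_univ _
  obtain ⟨n, -, m, -, hnm, heq⟩ :=
    Finset.exists_ne_map_eq_of_card_lt_of_maps_to
      (by simpa using Nat.lt_succ_self (Fintype.card V)) hmap
  obtain ⟨vn, hvn⟩ := Option.ne_none_iff_exists'.mp (hcon n)
  obtain ⟨vm, hvm⟩ := Option.ne_none_iff_exists'.mp (hcon m)
  rw [hvn, hvm] at heq
  simp only [Option.getD_some] at heq
  subst heq
  exact hnm (ch_inj hM hMs ha hvn hvm)

open scoped Classical in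
/-- index of the last defined entry of the chain. -/
noncomputable def chStop (M Ms : Finset (Sym2 V)) (a : V) : ℕ :=
  if h : ∃ n, ch M Ms a n = none then Nat.find h - 1 else 0

/-- last vertex of the chain. -/
noncomputable def chLast (M Ms : Finset (Sym2 V)) (a : V) : V :=
  (ch M Ms a (chStop M Ms a)).getD a

section stopLemmas
variable {a : V} (hex : ∃ n, ch M Ms a n = none)
include hex

theorem chStop_spec : ch M Ms a (chStop M Ms a + 1) = none := by
  unfold chStop
  classical
  rw [dif_pos hex]
  have h0 : Nat.find hex ≠ 0 := by
    intro h
    have := Nat.find_spec hex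
    rw [h] at this
    exact Option.some_ne_none _ this
  rw [Nat.sub_add_cancel (Nat.one_le_iff_ne_zero.mpr h0)]
  exact Nat.find_spec hex

theorem ch_some_of_le_stop {n : ℕ} (hn : n ≤ chStop M Ms a) :
    ∃ v, ch M Ms a n = some v := by
  unfold chStop at hn
  classical
  rw [dif_pos hex] at hn
  have hlt : n < Nat.find hex := by
    have h0 : Nat.find hex ≠ 0 := by
      intro h
      have := Nat.find_spec hex
      rw [h] at this
      exact Option.some_ne_none _ this
    omega
  have := Nat.find_min hex hlt
  exact Option.ne_none_iff_exists'.mp this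

theorem ch_stop_eq : ch M Ms a (chStop M Ms a) = some (chLast M Ms a) := by
  obtain ⟨v, hv⟩ := ch_some_of_le_stop hex le_rfl
  unfold chLast
  rw [hv]
  rfl

/-- the stop is where the step fails. -/
theorem stp_last_none : stp M Ms (chStop M Ms a) (chLast M Ms a) = none := by
  have h1 := chStop_spec hex
  rw [ch_succ, ch_stop_eq hex] at h1
  exact h1

theorem chStop_pos (haMs : pt Ms a ≠ none) : 1 ≤ chStop M Ms a := by
  by_contra h
  have h0 : chStop M Ms a = 0 := by omega
  have := stp_last_none hex
  rw [h0] at this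
  have hl : chLast M Ms a = a := by
    have := ch_stop_eq hex
    rw [h0, show ch M Ms a 0 = some a from rfl] at this
    exact (Option.some_inj.mp this).symm
  rw [hl] at this
  unfold stp at this
  rw [if_pos (by omega)] at this
  exact haMs this

end stopLemmas

include hM hMs

/-- construction of the walk along the chain, with its key properties. -/
theorem walk_ex {a : V} (ha : pt M a = none) (hex : ∃ n, ch M Ms a n = none) :
    ∀ k m v, ch M Ms a m = some v → m + k = chStop M Ms a →
    ∃ p : G.Walk v (chLast M Ms a), p.length = k ∧
      (∀ u, u ∈ p.support → ∃ r, r ≤ k ∧ ch M Ms a (m + r) = some u) ∧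
      p.IsPath ∧
      ∀ (r : ℕ) (hr : r < p.edges.length), ∃ x y, ch M Ms a (m + r) = some x ∧
        ch M Ms a (m + r + 1) = some y ∧ p.edges.get ⟨r, hr⟩ = s(x, y) := by
  intro k
  induction k with
  | zero =>
    intro m v hv hm
    have hm0 : m = chStop M Ms a := by omega
    subst hm0
    have hvl : v = chLast M Ms a := by
      have := ch_stop_eq (M := M) (Ms := Ms) hex
      rw [hv] at this
      exact Option.some_inj.mp this
    refine ⟨(SimpleGraph.Walk.nil' v).copy rfl hvl, by simp, ?_, by simp, ?_⟩
    · intro u hu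
      rw [SimpleGraph.Walk.support_copy] at hu
      simp only [SimpleGraph.Walk.support_nil, List.mem_singleton] at hu
      exact ⟨0, le_rfl, by simpa [hu] using hv⟩
    · intro r hr
      rw [SimpleGraph.Walk.edges_copy] at hr
      simp at hr
  | succ k ih =>
    intro m v hv hm
    obtain ⟨w, hw⟩ := ch_some_of_le_stop (M := M) (Ms := Ms) hex
      (show m + 1 ≤ chStop M Ms a by omega)
    have hstep : stp M Ms m v = some w := by
      rw [ch_succ, hv] at hw
      exact hw
    have hadj : G.Adj v w := by
      unfold stp at hstep
      split at hstep
      · exact G.mem_edgeSet.mp (hMs.1 _ (pt_mem hstep))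
      · exact G.mem_edgeSet.mp (hM.1 _ (pt_mem hstep))
    obtain ⟨p', hlen, hsupp, hpath, hedges⟩ := ih (m + 1) w hw (by omega)
    refine ⟨SimpleGraph.Walk.cons hadj p', by simp [hlen], ?_, ?_, ?_⟩
    · intro u hu
      rw [SimpleGraph.Walk.support_cons] at hu
      rcases List.mem_cons.mp hu with rfl | hu
      · exact ⟨0, Nat.zero_le _, by simpa using hv⟩
      · obtain ⟨r, hr, hcr⟩ := hsupp u hu
        exact ⟨r + 1, by omega, by rw [show m + (r+1) = m + 1 + r by omega]; exact hcr⟩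
    · rw [SimpleGraph.Walk.cons_isPath_iff]
      refine ⟨hpath, fun hvp => ?_⟩
      obtain ⟨r, hr, hcr⟩ := hsupp v hvp
      have := ch_inj hM hMs ha hv hcr
      omega
    · intro r hr
      rcases r with - | r
      · refine ⟨v, w, by simpa using hv, by simpa using hw, ?_⟩
        simp [SimpleGraph.Walk.edges_cons]
      · have hr' : r < p'.edges.length := by
          simpa [SimpleGraph.Walk.edges_cons] using hr
        obtain ⟨x, y, hx, hy, hxy⟩ := hedges r hr'
        refine ⟨x, y, ?_, ?_, ?_⟩
        · rw [show m + (r+1) = m + 1 + r by omega]; exact hx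
        · rw [show m + (r+1) + 1 = m + 1 + r + 1 by omega]; exact hy
        · simp only [SimpleGraph.Walk.edges_cons]
          rw [← hxy]
          rfl

/-- if the chain from `a` stops at an odd index, it yields an augmenting path,
hence its stopping index is at least `2 * i - 1`. -/
theorem stop_ge {a : V} (ha : pt M a = none)
    (hodd : chStop M Ms a % 2 = 1) {i : ℕ}
    (hpath : ∀ (x y : V) (p : G.Walk x y), IsAugmentingPath G M p → 2 * i - 1 ≤ p.length) :
    2 * i - 1 ≤ chStop M Ms a := by
  have hex : ∃ n, ch M Ms a n = none := ch_exists_none hM hMs ha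
  obtain ⟨p, hlen, hsupp, hp, hedges⟩ := walk_ex hM hMs ha hex (chStop M Ms a) 0 a rfl
    (by omega)
  have hlast : pt M (chLast M Ms a) = none := by
    have := stp_last_none (M := M) (Ms := Ms) hex
    unfold stp at this
    rw [if_neg (by omega)] at this
    exact this
  have haug : IsAugmentingPath G M p := by
    refine ⟨hp, ?_, ?_, ?_, ?_⟩
    · intro hcon
      have h2 := ch_stop_eq (M := M) (Ms := Ms) hex
      rw [← hcon] at h2
      have := ch_inj hM hMs ha (show ch M Ms a 0 = some a from rfl) h2
      omega
    · exact pt_none_iff.mp ha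
    · exact pt_none_iff.mp hlast
    · intro r hr
      obtain ⟨x, y, hx, hy, hxy⟩ := hedges r hr
      rw [Nat.zero_add] at hx hy
      have hstep : stp M Ms r x = some y := by
        rw [ch_succ, hx] at hy
        exact hy
      rw [hxy]
      constructor
      · intro hmem
        by_contra hpar
        have hr0 : r % 2 = 0 := by omega
        have hpt : pt M x = some y := pt_eq_some hM hmem
        rcases Nat.eq_zero_or_pos r with rfl | hrpos
        · have hxa : x = a := by
            rw [show ch M Ms a 0 = some a from rfl] at hx
            exact (Option.some_inj.mp hx).symm
          rw [hxa, ha] at hpt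
          exact Option.some_ne_none _ hpt.symm
        · obtain ⟨r', rfl⟩ := Nat.exists_eq_succ_of_ne_zero hrpos.ne'
          obtain ⟨u, hu, -, hback⟩ := ch_back hM hMs hx
          unfold stp at hback
          rw [if_neg (by omega)] at hback
          have : u = y := Option.some_inj.mp (hback.symm.trans hpt)
          subst this
          have := ch_inj hM hMs ha hu hy
          omega
      · intro hpar
        unfold stp at hstep
        rw [if_neg (by omega)] at hstep
        exact pt_mem hstep
  have := hpath a (chLast M Ms a) p haug
  omega


omit hM hMs

theorem endpoints_card {N : Finset (Sym2 V)} (hN : IsMatchingSet G N) {e : Sym2 V}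
    (he : e ∈ N) : (Finset.univ.filter (· ∈ e)).card = 2 := by
  induction e using Sym2.ind with
  | _ x y =>
    have hxy : x ≠ y := (G.mem_edgeSet.mp (hN.1 _ he)).ne
    have : Finset.univ.filter (· ∈ s(x, y)) = {x, y} := by
      ext v
      simp [Sym2.mem_iff]
    rw [this, Finset.card_pair hxy]

/-- vertices covered by a set of edges -/
def cover (E : Finset (Sym2 V)) : Finset V :=
  E.biUnion (fun e => Finset.univ.filter (· ∈ e))

theorem mem_cover {E : Finset (Sym2 V)} {v : V} :
    v ∈ cover E ↔ ∃ e ∈ E, v ∈ e := by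
  unfold cover
  simp [Finset.mem_biUnion]

theorem cover_card {N E : Finset (Sym2 V)} (hN : IsMatchingSet G N) (hE : E ⊆ N) :
    (cover E).card = 2 * E.card := by
  unfold cover
  rw [Finset.card_biUnion]
  · rw [Finset.sum_congr rfl (fun e he => endpoints_card hN (hE he))]
    simp [Nat.mul_comm]
  · intro x hx y hy hxy
    simp only [Finset.disjoint_left, Finset.mem_filter]
    rintro v ⟨-, hvx⟩ ⟨-, hvy⟩
    exact hN.2 x (hE hx) y (hE hy) hxy v ⟨hvx, hvy⟩

theorem main_count (hM : IsMatchingSet G M) (hMs : IsMatchingSet G Ms) {i : ℕ}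
    (hi : 1 ≤ i)
    (hpath : ∀ (x y : V) (p : G.Walk x y), IsAugmentingPath G M p → 2 * i - 1 ≤ p.length) :
    i * Ms.card ≤ Ms.card + i * M.card := by
  classical
  rcases isEmpty_or_nonempty V with hV | hV
  · have : Ms = ∅ := by
      rw [Finset.eq_empty_iff_forall_notMem]
      intro e he
      induction e using Sym2.ind with
      | _ x y => exact (IsEmpty.false x).elim
    simp [this]
  set A : Finset V := Finset.univ.filter (fun v => pt M v = none ∧ pt Ms v ≠ none) with hA
  set A₁ : Finset V := A.filter (fun a => chStop M Ms a % 2 = 1) with hA1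
  set A₂ : Finset V := A.filter (fun a => ¬ chStop M Ms a % 2 = 1) with hA2
  have hAmem : ∀ a ∈ A, pt M a = none ∧ pt Ms a ≠ none := by
    intro a haa
    rw [hA] at haa
    exact (Finset.mem_filter.mp haa).2
  have hexA : ∀ a ∈ A, ∃ n, ch M Ms a n = none := fun a haa =>
    ch_exists_none hM hMs (hAmem a haa).1
  -- (G2) : i * |A₁| ≤ 2 * |Ms|
  have hG2 : i * A₁.card ≤ 2 * Ms.card := by
    set T : Finset (Sym2 V × V) :=
      Ms.biUnion (fun e => (Finset.univ.filter (· ∈ e)).image (fun v => (e, v))) with hT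
    have hTcard : T.card ≤ 2 * Ms.card := by
      calc T.card ≤ ∑ e ∈ Ms, ((Finset.univ.filter (· ∈ e)).image (fun v => (e, v))).card :=
            Finset.card_biUnion_le
        _ ≤ ∑ e ∈ Ms, 2 := by
            refine Finset.sum_le_sum (fun e he => ?_)
            calc ((Finset.univ.filter (· ∈ e)).image (fun v => (e, v))).card
                ≤ (Finset.univ.filter (· ∈ e)).card := Finset.card_image_le
              _ = 2 := endpoints_card hMs he
        _ = 2 * Ms.card := by simp [Nat.mul_comm]
    -- values of the chain at even positions, paired with their Ms-edge
    have hEv : ∀ a ∈ A₁, ∀ r < i, ∃ x y, ch M Ms a (2*r) = some x ∧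
        ch M Ms a (2*r+1) = some y ∧ s(x, y) ∈ Ms := by
      intro a ha1 r hr
      have haA : a ∈ A := (Finset.mem_filter.mp (hA1 ▸ ha1)).1
      have hodd := (Finset.mem_filter.mp (hA1 ▸ ha1)).2
      have hge : 2 * i - 1 ≤ chStop M Ms a :=
        stop_ge hM hMs (hAmem a haA).1 hodd hpath
      have h1 : 2*r + 1 ≤ chStop M Ms a := by omega
      obtain ⟨x, hx⟩ := ch_some_of_le_stop (M := M) (Ms := Ms) (hexA a haA)
        (show 2*r ≤ chStop M Ms a by omega)
      obtain ⟨y, hy⟩ := ch_some_of_le_stop (M := M) (Ms := Ms) (hexA a haA) h1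
      have hstep : stp M Ms (2*r) x = some y := by
        rw [ch_succ, hx] at hy
        exact hy
      unfold stp at hstep
      rw [if_pos (by omega)] at hstep
      exact ⟨x, y, hx, hy, pt_mem hstep⟩
    have hinj : ∀ q ∈ A₁ ×ˢ Finset.range i,
        (fun q : V × ℕ =>
          ((s((ch M Ms q.1 (2*q.2)).getD (Classical.arbitrary V),
              (ch M Ms q.1 (2*q.2+1)).getD (Classical.arbitrary V)) : Sym2 V),
            (ch M Ms q.1 (2*q.2)).getD (Classical.arbitrary V))) q ∈ T := by
      rintro ⟨a, r⟩ hq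
      obtain ⟨ha1, hr⟩ := Finset.mem_product.mp hq
      obtain ⟨x, y, hx, hy, hmem⟩ := hEv a ha1 r (Finset.mem_range.mp hr)
      simp only [hx, hy, Option.getD_some]
      rw [hT]
      refine Finset.mem_biUnion.mpr ⟨s(x,y), hmem, ?_⟩
      exact Finset.mem_image.mpr ⟨x, by simp, rfl⟩
    have hcard := Finset.card_le_card_of_injOn _ hinj ?injOn
    · rw [Finset.card_product, Finset.card_range] at hcard
      calc i * A₁.card = A₁.card * i := Nat.mul_comm _ _
        _ ≤ T.card := hcard
        _ ≤ 2 * Ms.card := hTcard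
    case injOn =>
      rintro ⟨a, r⟩ hq ⟨a', r'⟩ hq' heq
      obtain ⟨ha1, hr⟩ := Finset.mem_product.mp (Finset.mem_coe.mp hq)
      obtain ⟨ha1', hr'⟩ := Finset.mem_product.mp (Finset.mem_coe.mp hq')
      obtain ⟨x, y, hx, hy, -⟩ := hEv a ha1 r (Finset.mem_range.mp hr)
      obtain ⟨x', y', hx', hy', -⟩ := hEv a' ha1' r' (Finset.mem_range.mp hr')
      simp only [hx, hy, hx', hy', Option.getD_some, Prod.mk.injEq] at heq
      have hxx : x = x' := heq.2
      subst hxx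
      have haA : a ∈ A := (Finset.mem_filter.mp (hA1 ▸ ha1)).1
      have haA' : a' ∈ A := (Finset.mem_filter.mp (hA1 ▸ ha1')).1
      obtain ⟨h1, h2⟩ := ch_cross_chains hM hMs (hAmem a haA).1 (hAmem a' haA').1
        (2*r) (2*r') x (by omega) hx hx'
      exact Prod.ext h2 (by omega)
  -- (G1) : 2 * |Ms| ≤ |A₁| + 2 * |M|
  have hG1 : 2 * Ms.card ≤ A₁.card + 2 * M.card := by
    have hcov1 : (cover (Ms \ M)).card = 2 * (Ms \ M).card :=
      cover_card hMs (Finset.sdiff_subset)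
    have hcov2 : (cover (M \ Ms)).card = 2 * (M \ Ms).card :=
      cover_card hM (Finset.sdiff_subset)
    -- the M-unmatched part of cover (Ms \ M) is A
    have hpart : (cover (Ms \ M)).filter (fun v => pt M v = none) = A := by
      ext v
      constructor
      · intro hv
        obtain ⟨hvc, hvn⟩ := Finset.mem_filter.mp hv
        obtain ⟨e, he, hve⟩ := mem_cover.mp hvc
        obtain ⟨w, rfl⟩ := Sym2.mem_iff_exists.mp hve
        rw [hA]
        refine Finset.mem_filter.mpr ⟨Finset.mem_univ _, hvn, ?_⟩
        rw [pt_eq_some hMs (Finset.mem_sdiff.mp he).1]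
        simp
      · intro hv
        obtain ⟨hvm, hvn⟩ := hAmem v hv
        obtain ⟨w, hw⟩ := Option.ne_none_iff_exists'.mp hvn
        have hsw : s(v, w) ∈ Ms := pt_mem hw
        have hnm : s(v, w) ∉ M := by
          intro hcon
          rw [pt_eq_some hM hcon] at hvm
          exact Option.some_ne_none _ hvm
        exact Finset.mem_filter.mpr
          ⟨mem_cover.mpr ⟨s(v,w), Finset.mem_sdiff.mpr ⟨hsw, hnm⟩, Sym2.mem_mk_left _ _⟩, hvm⟩
    set D : Finset V := (cover (Ms \ M)).filter (fun v => ¬ pt M v = none) with hD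
    have hsplit : A.card + D.card = (cover (Ms \ M)).card := by
      rw [← hpart, hD]
      exact Finset.card_filter_add_card_filter_not _
    -- D ⊆ cover (M \ Ms)
    have hDsub : D ⊆ cover (M \ Ms) := by
      intro v hv
      obtain ⟨hvc, hvn⟩ := Finset.mem_filter.mp (hD ▸ hv)
      obtain ⟨w, hw⟩ := Option.ne_none_iff_exists'.mp hvn
      have hswM : s(v, w) ∈ M := pt_mem hw
      obtain ⟨e, he, hve⟩ := mem_cover.mp hvc
      obtain ⟨u, rfl⟩ := Sym2.mem_iff_exists.mp hve
      obtain ⟨heMs, heM⟩ := Finset.mem_sdiff.mp he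
      have hnMs : s(v, w) ∉ Ms := by
        intro hcon
        have := pt_unique hMs heMs hcon
        subst this
        exact heM hswM
      exact mem_cover.mpr ⟨s(v,w), Finset.mem_sdiff.mpr ⟨hswM, hnMs⟩, Sym2.mem_mk_left _ _⟩
    -- D is disjoint from chain-last vertices of A₂, which also lie in cover (M \ Ms)
    have hA2last : ∀ a ∈ A₂, chLast M Ms a ∈ cover (M \ Ms) ∧ pt Ms (chLast M Ms a) = none := by
      intro a ha2
      have haA : a ∈ A := (Finset.mem_filter.mp (hA2 ▸ ha2)).1
      have heven : chStop M Ms a % 2 = 0 := by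
        have := (Finset.mem_filter.mp (hA2 ▸ ha2)).2
        omega
      have hex := hexA a haA
      have hMsnone : pt Ms (chLast M Ms a) = none := by
        have := stp_last_none (M := M) (Ms := Ms) hex
        unfold stp at this
        rw [if_pos heven] at this
        exact this
      refine ⟨?_, hMsnone⟩
      have hpos : 1 ≤ chStop M Ms a := chStop_pos hex (hAmem a haA).2
      obtain ⟨s', hs'⟩ := Nat.exists_eq_succ_of_ne_zero (by omega : chStop M Ms a ≠ 0)
      have hlast := ch_stop_eq (M := M) (Ms := Ms) hex
      rw [hs'] at hlast
      obtain ⟨u, hu, -, hback⟩ := ch_back hM hMs hlast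
      unfold stp at hback
      rw [if_neg (by omega)] at hback
      have hswM : s(chLast M Ms a, u) ∈ M := pt_mem hback
      have hnMs : s(chLast M Ms a, u) ∉ Ms := by
        intro hcon
        rw [pt_eq_some hMs hcon] at hMsnone
        exact Option.some_ne_none _ hMsnone
      exact mem_cover.mpr ⟨_, Finset.mem_sdiff.mpr ⟨hswM, hnMs⟩, Sym2.mem_mk_left _ _⟩
    have hlastinj : Set.InjOn (chLast M Ms) A₂ := by
      intro a ha2 a' ha2' heq
      have haA : a ∈ A := (Finset.mem_filter.mp (hA2 ▸ (by exact_mod_cast ha2 : a ∈ A₂))).1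
      have haA' : a' ∈ A := (Finset.mem_filter.mp (hA2 ▸ (by exact_mod_cast ha2' : a' ∈ A₂))).1
      have he1 : chStop M Ms a % 2 = 0 := by
        have := (Finset.mem_filter.mp (hA2 ▸ (by exact_mod_cast ha2 : a ∈ A₂))).2
        omega
      have he2 : chStop M Ms a' % 2 = 0 := by
        have := (Finset.mem_filter.mp (hA2 ▸ (by exact_mod_cast ha2' : a' ∈ A₂))).2
        omega
      have hl1 := ch_stop_eq (M := M) (Ms := Ms) (hexA a haA)
      have hl2 := ch_stop_eq (M := M) (Ms := Ms) (hexA a' haA')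
      rw [heq] at hl1
      exact (ch_cross_chains hM hMs (hAmem a haA).1 (hAmem a' haA').1 _ _ _
        (by omega) hl1 hl2).2
    have hdisj : Disjoint D (A₂.image (chLast M Ms)) := by
      rw [Finset.disjoint_right]
      intro v hv
      obtain ⟨a, ha2, rfl⟩ := Finset.mem_image.mp hv
      have := (hA2last a ha2).2
      intro hvD
      obtain ⟨hvc, -⟩ := Finset.mem_filter.mp (hD ▸ hvD)
      obtain ⟨e, he, hve⟩ := mem_cover.mp hvc
      obtain ⟨w, rfl⟩ := Sym2.mem_iff_exists.mp hve
      rw [pt_eq_some hMs (Finset.mem_sdiff.mp he).1] at this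
      exact Option.some_ne_none _ this
    have hsub2 : D ∪ A₂.image (chLast M Ms) ⊆ cover (M \ Ms) := by
      intro v hv
      rcases Finset.mem_union.mp hv with hv | hv
      · exact hDsub hv
      · obtain ⟨a, ha2, rfl⟩ := Finset.mem_image.mp hv
        exact (hA2last a ha2).1
    have hcard2 : D.card + A₂.card ≤ 2 * (M \ Ms).card := by
      have h1 : (D ∪ A₂.image (chLast M Ms)).card ≤ (cover (M \ Ms)).card :=
        Finset.card_le_card hsub2
      rw [Finset.card_union_of_disjoint hdisj, Finset.card_image_of_injOn hlastinj,
        hcov2] at h1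
      exact h1
    have hAsplit : A₁.card + A₂.card = A.card := by
      rw [hA1, hA2]
      exact Finset.card_filter_add_card_filter_not _
    have hMsplit : (Ms \ M).card + (Ms ∩ M).card = Ms.card :=
      Finset.card_sdiff_add_card_inter _ _
    have hMsplit2 : (M \ Ms).card + (M ∩ Ms).card = M.card :=
      Finset.card_sdiff_add_card_inter _ _
    have hintercomm : (Ms ∩ M).card = (M ∩ Ms).card := by rw [Finset.inter_comm]
    omega
  -- combine
  have h5 := Nat.mul_le_mul_left i hG1
  rw [Nat.mul_add, show i * (2 * Ms.card) = 2 * (i * Ms.card) by ring,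
    show i * (2 * M.card) = 2 * (i * M.card) by ring] at h5
  omega

end HopcroftKarpAux

/-- Hopcroft–Karp: let `M` and `M*` be a matching and a maximum matching in `G`. If every
augmenting path with respect to `M` has length at least `2i - 1`, then
`|M| ≥ (1 - 1/i)·|M*|`. -/
theorem stmt_2 {V : Type*} [Fintype V] [DecidableEq V]
    (G : SimpleGraph V)
    (M Mstar : Finset (Sym2 V))
    (hM : IsMatchingSet G M) (hMstar : IsMatchingSet G Mstar)
    (hMstarMax : ∀ N : Finset (Sym2 V), IsMatchingSet G N → N.card ≤ Mstar.card)
    (i : ℕ) (hi : 1 ≤ i)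
    (hpath : ∀ (a b : V) (p : G.Walk a b), IsAugmentingPath G M p → 2 * i - 1 ≤ p.length) :
    (1 - 1 / (i : ℝ)) * Mstar.card ≤ (M.card : ℝ) := by
  have hcount := HopcroftKarpAux.main_count hM hMstar hi hpath
  have hi0 : (0:ℝ) < i := by
    have : 0 < i := hi
    exact_mod_cast this
  have hcast : (i:ℝ) * Mstar.card ≤ Mstar.card + i * M.card := by exact_mod_cast hcount
  have h1 : (1 - 1/(i:ℝ)) = ((i:ℝ) - 1)/i := by field_simp
  rw [h1, div_mul_eq_mul_div, div_le_iff₀ hi0]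
  nlinarith [hcast]
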